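/- Let a_n be a real sequence with a_{-1} = -1 and -1 < a_n < 1 for all n ≥ 0, and set u_n = (1+a_{n-1})(1-a_{n-2}) for n ≥ 1. If a_n = -1/(2(n+2)) - 1/(2(n+2)G_{n+1}) with G_n = Σ_{s=0}^n 1/(2s+1), then u_n = (n+1/2)²/(n(n+1)) for all n ≥ 1. -/
import Mathlib


/-- G_n = Σ_{s=0}^n 1/(2s+1). -/
noncomputable def Gsum (n : ℕ) : ℝ :=
  ∑ s ∈ Finset.range (n + 1), (1 : ℝ) / (2 * s + 1)

lemma Gsum_pos (n : ℕ) : 0 < Gsum n := by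
  apply Finset.sum_pos
  · intro i _
    positivity
  · exact ⟨0, Finset.mem_range.mpr (Nat.succ_pos n)⟩

lemma Gsum_succ (n : ℕ) : Gsum (n + 1) = Gsum n + 1 / (2 * (n : ℝ) + 3) := by
  simp only [Gsum, Finset.sum_range_succ]
  push_cast
  have h : 2 * ((n : ℝ) + 1) + 1 = 2 * n + 3 := by ring
  rw [h]

theorem DG_recurrence_coefficients (a : ℤ → ℝ)
    (ha_init : a (-1) = -1)
    (ha_bound : ∀ n : ℤ, 0 ≤ n → -1 < a n ∧ a n < 1)
    (ha_form : ∀ n : ℕ, a (n : ℤ)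
      = -1 / (2 * ((n : ℝ) + 2)) - 1 / (2 * ((n : ℝ) + 2) * Gsum (n + 1))) :
    ∀ n : ℕ, 1 ≤ n →
      (1 + a ((n : ℤ) - 1)) * (1 - a ((n : ℤ) - 2))
        = ((n : ℝ) + 1 / 2) ^ 2 / ((n : ℝ) * ((n : ℝ) + 1)) := by
  have key1 : ∀ m : ℕ, 1 + a (m : ℤ)
      = (2 * (m : ℝ) + 3) * Gsum m / (2 * ((m : ℝ) + 2) * Gsum (m + 1)) := by
    intro m
    have hG := Gsum_succ m
    have hGpos : (0 : ℝ) < Gsum m + 1 / (2 * (m : ℝ) + 3) := hG ▸ Gsum_pos (m + 1)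
    have hGmpos := Gsum_pos m
    have hm2 : (m : ℝ) + 2 ≠ 0 := by positivity
    have h3 : 2 * (m : ℝ) + 3 ≠ 0 := by positivity
    rw [ha_form m, hG]
    field_simp
    ring
  have key2 : ∀ m : ℕ, 1 - a (m : ℤ)
      = (2 * (m : ℝ) + 5) * Gsum (m + 2) / (2 * ((m : ℝ) + 2) * Gsum (m + 1)) := by
    intro m
    have hG : Gsum (m + 2) = Gsum (m + 1) + 1 / (2 * (m : ℝ) + 5) := by
      show Gsum (m + 1 + 1) = _
      rw [Gsum_succ (m + 1)]
      push_cast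
      ring_nf
    have hGpos := Gsum_pos (m + 1)
    have h5 : 2 * ((m : ℝ)) + 5 ≠ 0 := by positivity
    have hm2 : (m : ℝ) + 2 ≠ 0 := by positivity
    rw [ha_form m, hG]
    field_simp
    ring
  intro n hn
  match n, hn with
  | 1, _ =>
    have h0 := key1 0
    have hG0 : Gsum 0 = 1 := by simp [Gsum]
    have hG1 : Gsum 1 = 1 + 1 / 3 := by
      simp [Gsum, Finset.sum_range_succ]
      norm_num
    rw [hG0, hG1] at h0
    norm_num at h0 ⊢
    rw [ha_init]
    norm_num
    linarith
  | (k + 2), _ =>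
    have e1 : ((k + 2 : ℕ) : ℤ) - 1 = ((k + 1 : ℕ) : ℤ) := by push_cast; ring
    have e2 : ((k + 2 : ℕ) : ℤ) - 2 = ((k : ℕ) : ℤ) := by push_cast; ring
    rw [e1, e2, key1 (k + 1), key2 k]
    have hGk := Gsum_pos k
    have hGk1 := Gsum_pos (k + 1)
    have hGk2 := Gsum_pos (k + 2)
    have hgk : Gsum (k + 1 + 1) = Gsum (k + 2) := rfl
    rw [hgk]
    have h1 : (k : ℝ) + 1 ≠ 0 := by positivity
    have h2 : (k : ℝ) + 2 ≠ 0 := by positivity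
    have h3 : (k : ℝ) + 3 ≠ 0 := by positivity
    push_cast
    field_simp
    ring
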